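/- If Ψ : Y ⇉ X is an upper hemi-continuous closed-valued multivalued function between metric spaces with X compact, then the function y ↦ diam_m(Ψ(y)) is upper semi-continuous for every m ≥ 2. -/
import Mathlib


open Metric Set

/-- The minimal pairwise distance of an `m`-tuple. -/
noncomputable def Dm {X : Type*} [MetricSpace X] (m : ℕ) (x : Fin m → X) : ℝ :=
  sInf {r : ℝ | ∃ i j : Fin m, i ≠ j ∧ r = dist (x i) (x j)}

/-- The multivariate diameter of a set. -/
noncomputable def diamm {X : Type*} [MetricSpace X] (m : ℕ) (A : Set X) : ℝ :=
  sSup {r : ℝ | ∃ a : Fin m → X, (∀ i, a i ∈ A) ∧ r = Dm m a}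

lemma Dm_nonneg {X : Type*} [MetricSpace X] (m : ℕ) (x : Fin m → X) : 0 ≤ Dm m x :=
  Real.sInf_nonneg (by rintro r ⟨i, j, -, rfl⟩; exact dist_nonneg)

lemma Dm_le_dist {X : Type*} [MetricSpace X] {m : ℕ} (x : Fin m → X) {i j : Fin m}
    (h : i ≠ j) : Dm m x ≤ dist (x i) (x j) :=
  csInf_le ⟨0, by rintro r ⟨i, j, -, rfl⟩; exact dist_nonneg⟩ ⟨i, j, h, rfl⟩

lemma Dm_perturb {X : Type*} [MetricSpace X] {m : ℕ} (hm : 2 ≤ m) {a b : Fin m → X}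
    {ε : ℝ} (h : ∀ i, dist (a i) (b i) ≤ ε) : Dm m a ≤ Dm m b + 2 * ε := by
  have hne : {r : ℝ | ∃ i j : Fin m, i ≠ j ∧ r = dist (b i) (b j)}.Nonempty := by
    refine ⟨_, ⟨⟨0, by omega⟩, ⟨1, by omega⟩, ?_, rfl⟩⟩
    simp [Fin.ext_iff]
  rw [← sub_le_iff_le_add]
  refine le_csInf hne ?_
  rintro r ⟨i, j, hij, rfl⟩
  rw [sub_le_iff_le_add]
  calc Dm m a ≤ dist (a i) (a j) := Dm_le_dist a hij
    _ ≤ dist (a i) (b i) + dist (b i) (b j) + dist (b j) (a j) := dist_triangle4 _ _ _ _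
    _ ≤ ε + dist (b i) (b j) + ε := by
        have := h i; have := h j; rw [dist_comm (b j)]; linarith [h i, h j]
    _ = dist (b i) (b j) + 2 * ε := by ring

lemma diamm_bddAbove {X : Type*} [MetricSpace X] [CompactSpace X] (m : ℕ) (hm : 2 ≤ m)
    (A : Set X) :
    BddAbove {r : ℝ | ∃ a : Fin m → X, (∀ i, a i ∈ A) ∧ r = Dm m a} := by
  obtain ⟨C, hC⟩ := Metric.isBounded_iff.1 (isCompact_univ (X := X)).isBounded
  refine ⟨C, ?_⟩
  rintro r ⟨a, -, rfl⟩
  have h01 : (⟨0, by omega⟩ : Fin m) ≠ ⟨1, by omega⟩ := by simp [Fin.ext_iff]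
  exact (Dm_le_dist a h01).trans (hC (mem_univ _) (mem_univ _))

lemma diamm_nonneg {X : Type*} [MetricSpace X] (m : ℕ) (A : Set X) : 0 ≤ diamm m A :=
  Real.sSup_nonneg (by rintro r ⟨a, -, rfl⟩; exact Dm_nonneg m a)

theorem upperSemicontinuous_diamm_of_upperHemicontinuous
    {X Y : Type*} [MetricSpace X] [CompactSpace X] [MetricSpace Y]
    (Ψ : Y → Set X) (hclosed : ∀ y, IsClosed (Ψ y))
    (hhemi : ∀ U : Set X, IsOpen U → IsOpen {y : Y | Ψ y ⊆ U})
    (m : ℕ) (hm : 2 ≤ m) :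
    UpperSemicontinuous fun y : Y => diamm m (Ψ y) := by
  intro y₀ c hc
  simp only at hc ⊢
  set A := Ψ y₀ with hA
  set ε : ℝ := (c - diamm m A) / 3 with hε
  have hεpos : 0 < ε := by
    have := hc; simp only [hε]; linarith
  set U : Set X := thickening ε A with hU
  have hopen : IsOpen {y : Y | Ψ y ⊆ U} := hhemi U (isOpen_thickening)
  have hy₀ : y₀ ∈ {y : Y | Ψ y ⊆ U} := self_subset_thickening hεpos A
  filter_upwards [hopen.mem_nhds hy₀] with y hy
  have key : diamm m (Ψ y) ≤ diamm m A + 2 * ε := by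
    refine Real.sSup_le ?_ (by linarith [diamm_nonneg m A])
    rintro r ⟨a, ha, rfl⟩
    -- each a i lies in the ε-thickening of A
    have hb : ∀ i, ∃ z ∈ A, dist (a i) z < ε := fun i =>
      Metric.mem_thickening_iff.1 (hy (ha i))
    choose b hbA hbd using hb
    have h1 : Dm m a ≤ Dm m b + 2 * ε := Dm_perturb hm (fun i => (hbd i).le)
    have h2 : Dm m b ≤ diamm m A :=
      le_csSup (diamm_bddAbove m hm A) ⟨b, hbA, rfl⟩
    linarith
  have : diamm m A + 2 * ε < c := by simp only [hε]; linarith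
  linarith
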